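/- Let V be a finite type, let M ≥ 1 be a natural number, and let s, d, s₁, d₁, …, s_n, d_n, d'₁, …, d'_D be 2n + D + 2 pairwise distinct elements of V. The number of functions H : V → Fin M satisfying both (i) for every i ∈ {1, …, n}, not both H(sᵢ) = H(s) and H(dᵢ) = H(d), and (ii) for every j ∈ {1, …, D}, H(d'ⱼ) ≠ H(d), equals (M² − 1)^n · (M − 1)^D · M^(|V| − 2n − D). Consequently, under the uniform distribution on functions, the probability P that the edge (s, d) suffers no edge collision is (1 − 1/M²)^n · (1 − 1/M)^D. -/

import Mathlib

lemma card_precomp {X V : Type*} [Fintype X] [Fintype V] [DecidableEq V]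
    (M : ℕ) (g : X → V) (hg : Function.Injective g)
    (Q : (X → Fin M) → Prop) :
    Nat.card {H : V → Fin M // Q (fun a => H (g a))} =
    Nat.card {f : X → Fin M // Q f} * M ^ (Fintype.card V - Fintype.card X) := by
  classical
  let E1 := Equiv.piEquivPiSubtypeProd (· ∈ Set.range g) (fun _ : V => Fin M)
  let E2 : ({x // x ∈ Set.range g} → Fin M) ≃ (X → Fin M) :=
    Equiv.arrowCongr (Equiv.ofInjective g hg).symm (Equiv.refl _)
  let E := E1.trans (E2.prodCongr (Equiv.refl _))
  have hE : ∀ H : V → Fin M, (E H).1 = fun a => H (g a) := by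
    intro H; ext a; rfl
  have e : {H : V → Fin M // Q (fun a => H (g a))} ≃
      {p : (X → Fin M) × ({x // ¬ x ∈ Set.range g} → Fin M) // Q p.1} :=
    E.subtypeEquiv (fun H => by rw [hE])
  have e2 : {p : (X → Fin M) × ({x // ¬ x ∈ Set.range g} → Fin M) // Q p.1} ≃
      {f : X → Fin M // Q f} × ({x // ¬ x ∈ Set.range g} → Fin M) :=
    (Equiv.subtypeEquivRight (fun p => by simp)).trans
      ((Equiv.subtypeProdEquivProd (p := Q) (q := fun _ => True)).trans
        ((Equiv.refl _).prodCongr (Equiv.subtypeUnivEquiv (fun _ => trivial))))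
  rw [Nat.card_congr (e.trans e2), Nat.card_prod]
  congr 1
  rw [Nat.card_fun]
  have h1 : Nat.card {x // ¬ x ∈ Set.range g} = Fintype.card V - Fintype.card X := by
    simp only [Nat.card_eq_fintype_card]
    rw [Fintype.card_subtype_compl]
    congr 1
    exact (Fintype.card_congr (Equiv.ofInjective g hg)).symm
  rw [h1, Nat.card_eq_fintype_card, Fintype.card_fin]

section
variable (M n D : ℕ)

abbrev Idx (n D : ℕ) := (Unit ⊕ Unit) ⊕ ((Fin n ⊕ Fin n) ⊕ Fin D)

def QQ (f : Idx n D → Fin M) : Prop :=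
  (∀ i : Fin n, ¬(f (.inr (.inl (.inl i))) = f (.inl (.inl ())) ∧
      f (.inr (.inl (.inr i))) = f (.inl (.inr ())))) ∧
  (∀ j : Fin D, f (.inr (.inr j)) ≠ f (.inl (.inr ())))

def splitEquiv : (Idx n D → Fin M) ≃
    (Fin M × Fin M) × ((Fin n → Fin M) × (Fin n → Fin M)) × (Fin D → Fin M) where
  toFun f := ((f (.inl (.inl ())), f (.inl (.inr ()))),
    (fun i => f (.inr (.inl (.inl i))), fun i => f (.inr (.inl (.inr i)))),
    fun j => f (.inr (.inr j)))
  invFun t := fun x => match x with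
    | .inl (.inl _) => t.1.1
    | .inl (.inr _) => t.1.2
    | .inr (.inl (.inl i)) => t.2.1.1 i
    | .inr (.inl (.inr i)) => t.2.1.2 i
    | .inr (.inr j) => t.2.2 j
  left_inv f := by funext x; rcases x with (⟨⟩|⟨⟩)|((i|i)|j) <;> rfl
  right_inv t := rfl

lemma card_fixed (hM : 1 ≤ M) (a b : Fin M) :
    Nat.card {y : ((Fin n → Fin M) × (Fin n → Fin M)) × (Fin D → Fin M) //
      (∀ i, ¬(y.1.1 i = a ∧ y.1.2 i = b)) ∧ ∀ j, y.2 j ≠ b} =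
    (M ^ 2 - 1) ^ n * (M - 1) ^ D := by
  classical
  rw [Nat.card_congr (Equiv.subtypeProdEquivProd
      (p := fun uv : (Fin n → Fin M) × (Fin n → Fin M) => ∀ i, ¬(uv.1 i = a ∧ uv.2 i = b))
      (q := fun w : Fin D → Fin M => ∀ j, w j ≠ b)), Nat.card_prod]
  congr 1
  · have e1 : {uv : (Fin n → Fin M) × (Fin n → Fin M) // ∀ i, ¬(uv.1 i = a ∧ uv.2 i = b)} ≃
        {f : Fin n → Fin M × Fin M // ∀ i, ¬((f i).1 = a ∧ (f i).2 = b)} :=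
      ((Equiv.arrowProdEquivProdArrow (Fin n) (fun _ => Fin M) (fun _ => Fin M)).symm).subtypeEquiv
        (fun p => by simp [Equiv.arrowProdEquivProdArrow])
    have e2 : {f : Fin n → Fin M × Fin M // ∀ i, ¬((f i).1 = a ∧ (f i).2 = b)} ≃
        (Fin n → {p : Fin M × Fin M // ¬(p.1 = a ∧ p.2 = b)}) :=
      Equiv.subtypePiEquivPi (p := fun (_ : Fin n) (p : Fin M × Fin M) => ¬(p.1 = a ∧ p.2 = b))
    have e3 : {p : Fin M × Fin M // ¬(p.1 = a ∧ p.2 = b)} ≃ {p : Fin M × Fin M // p ≠ (a, b)} :=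
      Equiv.subtypeEquivRight (fun p => by simp [Prod.ext_iff])
    rw [Nat.card_congr (e1.trans e2), Nat.card_fun, Nat.card_congr e3,
      Nat.card_eq_fintype_card (α := {p : Fin M × Fin M // p ≠ (a,b)}),
      Fintype.card_subtype_compl, Fintype.card_subtype_eq, Nat.card_eq_fintype_card,
      Fintype.card_fin, Fintype.card_prod, Fintype.card_fin, ← pow_two]
  · have e : {w : Fin D → Fin M // ∀ j, w j ≠ b} ≃ (Fin D → {x : Fin M // x ≠ b}) :=
      Equiv.subtypePiEquivPi (p := fun _ x => x ≠ b)
    rw [Nat.card_congr e, Nat.card_fun, Nat.card_eq_fintype_card,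
      Fintype.card_subtype_compl, Fintype.card_subtype_eq, Nat.card_eq_fintype_card,
      Fintype.card_fin, Fintype.card_fin]

end

lemma card_QQ (hM : 1 ≤ M) :
    Nat.card {f : Idx n D → Fin M // QQ M n D f} =
    M ^ 2 * ((M ^ 2 - 1) ^ n * (M - 1) ^ D) := by
  classical
  have e0 : {f : Idx n D → Fin M // QQ M n D f} ≃
      {t : (Fin M × Fin M) × ((Fin n → Fin M) × (Fin n → Fin M)) × (Fin D → Fin M) //
        (∀ i, ¬(t.2.1.1 i = t.1.1 ∧ t.2.1.2 i = t.1.2)) ∧ ∀ j, t.2.2 j ≠ t.1.2} :=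
    (splitEquiv M n D).subtypeEquiv (fun f => Iff.rfl)
  have e1 := Equiv.subtypeProdEquivSigmaSubtype
    (fun (ab : Fin M × Fin M)
         (y : ((Fin n → Fin M) × (Fin n → Fin M)) × (Fin D → Fin M)) =>
      (∀ i, ¬(y.1.1 i = ab.1 ∧ y.1.2 i = ab.2)) ∧ ∀ j, y.2 j ≠ ab.2)
  rw [Nat.card_congr (e0.trans e1), Nat.card_eq_fintype_card, Fintype.card_sigma]
  have : ∀ ab : Fin M × Fin M,
      Nat.card {y : ((Fin n → Fin M) × (Fin n → Fin M)) × (Fin D → Fin M) //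
        (∀ i, ¬(y.1.1 i = ab.1 ∧ y.1.2 i = ab.2)) ∧ ∀ j, y.2 j ≠ ab.2} =
      (M ^ 2 - 1) ^ n * (M - 1) ^ D := fun ab => card_fixed M n D hM ab.1 ab.2
  simp only [← Nat.card_eq_fintype_card, this, Finset.sum_const, smul_eq_mul, Finset.card_univ, Fintype.card_prod,
    Fintype.card_fin, ← pow_two]
  simp [Nat.card_eq_fintype_card, ← pow_two]

/-- Counting hash functions under which the edge `(s, d)` suffers no edge
collision: none of the `n` disjoint edges `(se i, de i)` collides with
`(s, d)` and none of the `D` adjacent edges `(s, de' j)` collides with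
`(s, d)` (all `2n + D + 2` involved nodes pairwise distinct). The count is
`(M² - 1)^n * (M - 1)^D * M^(|V| - 2n - D)`, and the corresponding uniform
probability is `(1 - 1/M²)^n * (1 - 1/M)^D`. -/
theorem gss_edge_no_collision_count
    (V : Type*) [Fintype V] [DecidableEq V] (M n D : ℕ) (hM : 1 ≤ M)
    (s d : V) (se de : Fin n → V) (de' : Fin D → V)
    (hdist : (s :: d :: (List.ofFn se ++ List.ofFn de ++ List.ofFn de')).Nodup) :
    (Finset.univ.filter
        (fun H : V → Fin M =>
          (∀ i : Fin n, ¬(H (se i) = H s ∧ H (de i) = H d)) ∧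
          (∀ j : Fin D, H (de' j) ≠ H d))).card
      = (M ^ 2 - 1) ^ n * (M - 1) ^ D * M ^ (Fintype.card V - 2 * n - D) ∧
    ((Finset.univ.filter
        (fun H : V → Fin M =>
          (∀ i : Fin n, ¬(H (se i) = H s ∧ H (de i) = H d)) ∧
          (∀ j : Fin D, H (de' j) ≠ H d))).card : ℝ)
        / ((M : ℝ) ^ Fintype.card V)
      = (1 - 1 / (M : ℝ) ^ 2) ^ n * (1 - 1 / (M : ℝ)) ^ D := by
  classical
  have hlen : (s :: d :: (List.ofFn se ++ List.ofFn de ++ List.ofFn de')).length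
      = 2 + (n + n + D) := by simp; omega
  have hcV : 2 + (n + n + D) ≤ Fintype.card V := hlen ▸ hdist.length_le_card
  have e2 : Fintype.card V - 2 * n - D = 2 + (Fintype.card V - (2 + (n + n + D))) := by
    omega
  have e3 : 2 * n + D + (Fintype.card V - 2 * n - D) = Fintype.card V := by omega
  simp only [List.nodup_cons, List.nodup_append, List.mem_cons, List.mem_append,
    List.mem_ofFn, List.nodup_ofFn, List.disjoint_left, Set.mem_range,
    not_or, not_exists] at hdist
  obtain ⟨⟨h1, ⟨h2, h3⟩, h4⟩, ⟨⟨h5, h6⟩, h7⟩, ⟨h8, h9, h11⟩, h10, h12⟩ := hdist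
  set g : Idx n D → V :=
    Sum.elim (Sum.elim (fun _ => s) (fun _ => d)) (Sum.elim (Sum.elim se de) de') with hg
  have hginj : Function.Injective g := by
    rintro ((⟨⟩|⟨⟩)|((i|i)|j)) ((⟨⟩|⟨⟩)|((i'|i')|j')) h <;>
      simp only [hg, Sum.elim_inl, Sum.elim_inr] at h
    · rfl
    · exact absurd h h1
    · exact absurd h.symm (h2 i')
    · exact absurd h.symm (h3 i')
    · exact absurd h.symm (h4 j')
    · exact absurd h.symm h1
    · rfl
    · exact absurd h.symm (h5 i')
    · exact absurd h.symm (h6 i')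
    · exact absurd h.symm (h7 j')
    · exact absurd h (h2 i)
    · exact absurd h (h5 i)
    · exact congrArg (fun k => (Sum.inr (Sum.inl (Sum.inl k)) : Idx n D)) (h8 h)
    · exact absurd h (h11 _ ⟨i, rfl⟩ _ ⟨i', rfl⟩)
    · exact absurd h (h12 _ (Or.inl ⟨i, rfl⟩) _ ⟨j', rfl⟩)
    · exact absurd h (h3 i)
    · exact absurd h (h6 i)
    · exact absurd h.symm (h11 _ ⟨i', rfl⟩ _ ⟨i, rfl⟩)
    · exact congrArg (fun k => (Sum.inr (Sum.inl (Sum.inr k)) : Idx n D)) (h9 h)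
    · exact absurd h (h12 _ (Or.inr ⟨i, rfl⟩) _ ⟨j', rfl⟩)
    · exact absurd h (h4 j)
    · exact absurd h (h7 j)
    · exact absurd h.symm (h12 _ (Or.inl ⟨i', rfl⟩) _ ⟨j, rfl⟩)
    · exact absurd h.symm (h12 _ (Or.inr ⟨i', rfl⟩) _ ⟨j, rfl⟩)
    · exact congrArg (fun k => (Sum.inr (Sum.inr k) : Idx n D)) (h10 h)
  have hcount : (Finset.univ.filter
        (fun H : V → Fin M =>
          (∀ i : Fin n, ¬(H (se i) = H s ∧ H (de i) = H d)) ∧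
          (∀ j : Fin D, H (de' j) ≠ H d))).card
      = Nat.card {H : V → Fin M // QQ M n D (fun a => H (g a))} := by
    rw [Nat.card_eq_fintype_card, Fintype.card_subtype]
    congr 1
    ext H
    simp only [Finset.mem_filter, Finset.mem_univ, true_and, QQ, hg,
      Sum.elim_inl, Sum.elim_inr]
  have hX : Fintype.card (Idx n D) = 2 + (n + n + D) := by
    simp [Idx]
  have hmain : (Finset.univ.filter
        (fun H : V → Fin M =>
          (∀ i : Fin n, ¬(H (se i) = H s ∧ H (de i) = H d)) ∧
          (∀ j : Fin D, H (de' j) ≠ H d))).card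
      = (M ^ 2 - 1) ^ n * (M - 1) ^ D * M ^ (Fintype.card V - 2 * n - D) := by
    rw [hcount, card_precomp M g hginj, card_QQ hM, hX]
    rw [e2, pow_add]; ring
  refine ⟨hmain, ?_⟩
  rw [hmain]
  have hM0 : (M : ℝ) ≠ 0 := by positivity
  have hM2 : 1 ≤ M ^ 2 := Nat.one_le_pow _ _ hM
  push_cast [Nat.cast_sub hM2, Nat.cast_sub hM]
  set e := Fintype.card V - 2 * n - D with he
  rw [← e3, pow_add, pow_add, pow_mul]
  have hMpow : ((M : ℝ) ^ 2) ^ n ≠ 0 := by positivity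
  field_simp
  have k1 : (M:ℝ) ^ 2 * (((M:ℝ) ^ 2 - 1) / (M:ℝ) ^ 2) = (M:ℝ) ^ 2 - 1 := by field_simp
  have k2 : (M:ℝ) * (((M:ℝ) - 1) / (M:ℝ)) = (M:ℝ) - 1 := by field_simp
  rw [show ((M:ℝ) ^ 2) ^ n * (M:ℝ) ^ D * (((M:ℝ) ^ 2 - 1) / (M:ℝ) ^ 2) ^ n * (((M:ℝ) - 1) / (M:ℝ)) ^ D
      = ((M:ℝ) ^ 2 * (((M:ℝ) ^ 2 - 1) / (M:ℝ) ^ 2)) ^ n * ((M:ℝ) * (((M:ℝ) - 1) / (M:ℝ))) ^ D by rw [mul_pow, mul_pow]; ring,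
    k1, k2]
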